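/- Under the block decomposition W = [[W¹¹, W¹²],[0, W²²]], Λ = [[Λ¹¹, 0],[0, I_{n−n'}]] with the oblivious agents indexed n'+1,…,n (0 ≤ n' < n), suppose C is regular with limit C_* = lim_{k→∞} C^k, and either C_* = 0 or W²² is regular with limit W²²_* (where by convention W²²_* := 0 if C_* = 0 and lim_{k→∞}(W²²)^k does not exist). Then the solution of x(k+1) = (ΛW ⊗ C)x(k) + ((I_n − Λ) ⊗ I_m)u, x(0) = u = (u¹, u²), converges to the vector x'_C given blockwise by x'_C¹ = (I − Λ¹¹W¹¹ ⊗ C)^{-1}[((I − Λ¹¹) ⊗ I_m)u¹ + ((Λ¹¹W¹²W²²_*) ⊗ CC_*)u²] and x'_C² = (W²²_* ⊗ C_*)u². -/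

import Mathlib

open Filter Matrix Kronecker Finset

attribute [local instance] Matrix.linftyOpNormedAddCommGroup Matrix.linftyOpNormedRing

namespace FJ9

variable {ι κ : Type*} [Fintype ι] [Fintype κ] [DecidableEq ι] [DecidableEq κ]

lemma norm_one_le : ‖(1 : Matrix ι ι ℝ)‖ ≤ 1 := by
  rw [← Matrix.diagonal_one, Matrix.linfty_opNorm_diagonal]
  refine (pi_norm_le_iff_of_nonneg zero_le_one).2 fun i => by simp

lemma norm_kron (A : Matrix ι ι ℝ) (B : Matrix κ κ ℝ) : ‖A ⊗ₖ B‖ ≤ ‖A‖ * ‖B‖ := by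
  rw [← coe_nnnorm, ← coe_nnnorm, ← coe_nnnorm, ← NNReal.coe_mul, NNReal.coe_le_coe,
    Matrix.linfty_opNNNorm_def]
  refine Finset.sup_le fun p _ => ?_
  calc ∑ q : ι × κ, ‖(A ⊗ₖ B) p q‖₊
      = (∑ j, ‖A p.1 j‖₊) * (∑ b, ‖B p.2 b‖₊) := by
        rw [Finset.sum_mul_sum, ← Finset.univ_product_univ, Finset.sum_product]
        simp [Matrix.kroneckerMap_apply, nnnorm_mul]
    _ ≤ ‖A‖₊ * ‖B‖₊ := by
        rw [Matrix.linfty_opNNNorm_def, Matrix.linfty_opNNNorm_def]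
        exact mul_le_mul' (Finset.le_sup (f := fun i => ∑ j, ‖A i j‖₊) (Finset.mem_univ _))
          (Finset.le_sup (f := fun i => ∑ j, ‖B i j‖₊) (Finset.mem_univ _))

lemma kron_pow (A : Matrix ι ι ℝ) (B : Matrix κ κ ℝ) (k : ℕ) :
    (A ⊗ₖ B) ^ k = (A ^ k) ⊗ₖ (B ^ k) := by
  induction k with
  | zero => simp [Matrix.one_kronecker_one]
  | succ k ih => rw [pow_succ, pow_succ, pow_succ, ih, Matrix.mul_kronecker_mul]

lemma summable_pow_norm {N : Matrix ι ι ℝ} {q : ℕ} (hq : 0 < q) (hρ : ‖N ^ q‖ < 1) :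
    Summable fun j => ‖N ^ j‖ := by
  set ρ := ‖N ^ q‖ with hρdef
  have hρ0 : 0 ≤ ρ := norm_nonneg _
  have hpow : ∀ T, ‖(N ^ q) ^ T‖ ≤ ρ ^ T := by
    intro T; induction T with
    | zero => simpa using norm_one_le
    | succ T ih =>
      rw [pow_succ, pow_succ]
      exact le_trans (norm_mul_le _ _)
        (mul_le_mul ih le_rfl (norm_nonneg _) (pow_nonneg hρ0 _))
  have key : ∀ T, ∑ j ∈ range (q * T), ‖N ^ j‖
      ≤ (∑ s ∈ range q, ‖N ^ s‖) * ∑ i ∈ range T, ρ ^ i := by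
    intro T; induction T with
    | zero => simp
    | succ T ih =>
      have hqT : q * (T + 1) = q * T + q := by ring
      rw [hqT, Finset.sum_range_add, Finset.sum_range_succ, mul_add]
      refine add_le_add ih ?_
      calc ∑ s ∈ range q, ‖N ^ (q * T + s)‖
          ≤ ∑ s ∈ range q, ρ ^ T * ‖N ^ s‖ := by
            refine Finset.sum_le_sum fun s _ => ?_
            rw [pow_add, pow_mul]
            exact le_trans (norm_mul_le _ _)
              (mul_le_mul (hpow T) le_rfl (norm_nonneg _) (pow_nonneg hρ0 _))
        _ = (∑ s ∈ range q, ‖N ^ s‖) * ρ ^ T := by rw [← Finset.mul_sum]; ring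
  refine summable_of_sum_range_le (c := (∑ s ∈ range q, ‖N ^ s‖) * (1 - ρ)⁻¹)
    (fun n => norm_nonneg _) fun t => ?_
  calc ∑ j ∈ range t, ‖N ^ j‖ ≤ ∑ j ∈ range (q * t), ‖N ^ j‖ :=
        Finset.sum_le_sum_of_subset_of_nonneg
          (Finset.range_subset_range.2 (Nat.le_mul_of_pos_left t hq)) (fun _ _ _ => norm_nonneg _)
    _ ≤ (∑ s ∈ range q, ‖N ^ s‖) * ∑ i ∈ range t, ρ ^ i := key t
    _ ≤ (∑ s ∈ range q, ‖N ^ s‖) * (1 - ρ)⁻¹ := by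
        refine mul_le_mul le_rfl ?_ (Finset.sum_nonneg fun i _ => pow_nonneg hρ0 _)
          (Finset.sum_nonneg fun s _ => norm_nonneg _)
        rw [← tsum_geometric_of_lt_one hρ0 hρ]
        exact Summable.sum_le_tsum _ (fun i _ => pow_nonneg hρ0 _) (summable_geometric_of_lt_one hρ0 hρ)



lemma tendsto_conv {a d : ℕ → ℝ} (ha0 : ∀ j, 0 ≤ a j) (hsum : Summable a)
    (hd0 : ∀ j, 0 ≤ d j) (hd : Tendsto d atTop (nhds 0)) :
    Tendsto (fun k => ∑ j ∈ range k, a j * d (k - 1 - j)) atTop (nhds 0) := by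
  obtain ⟨D, hD⟩ := hd.bddAbove_range
  have hD' : ∀ j, d j ≤ D := fun j => hD ⟨j, rfl⟩
  have hD0 : 0 ≤ D := le_trans (hd0 0) (hD' 0)
  set S := ∑' j, a j with hS
  have hS0 : 0 ≤ S := tsum_nonneg fun j => ha0 j
  have hpartle : ∀ t, ∑ j ∈ range t, a j ≤ S :=
    fun t => Summable.sum_le_tsum _ (fun i _ => ha0 i) hsum
  rw [Metric.tendsto_atTop]
  intro ε hε
  set ε' := ε / (S + D + 1) with hε'
  have hε'0 : 0 < ε' := div_pos hε (by linarith)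
  have hpart : Tendsto (fun T => ∑ j ∈ range T, a j) atTop (nhds S) :=
    hsum.hasSum.tendsto_sum_nat
  obtain ⟨T, hT⟩ : ∃ T, S - ∑ j ∈ range T, a j < ε' := by
    obtain ⟨T, hT⟩ := (Metric.tendsto_atTop.1 hpart) ε' hε'0
    refine ⟨T, ?_⟩
    have := hT T le_rfl
    rw [Real.dist_eq, abs_sub_lt_iff] at this
    linarith [this.2]
  obtain ⟨J, hJ⟩ := (Metric.tendsto_atTop.1 hd) ε' hε'0
  refine ⟨J + T + 1, fun k hk => ?_⟩
  have hTk : T ≤ k := by omega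
  rw [Real.dist_eq, sub_zero, abs_of_nonneg
    (Finset.sum_nonneg fun j _ => mul_nonneg (ha0 j) (hd0 _))]
  rw [← Finset.sum_range_add_sum_Ico _ hTk]
  have h1 : ∑ j ∈ range T, a j * d (k - 1 - j) ≤ S * ε' := by
    calc ∑ j ∈ range T, a j * d (k - 1 - j) ≤ ∑ j ∈ range T, a j * ε' := by
          refine Finset.sum_le_sum fun j hj => ?_
          refine mul_le_mul le_rfl ?_ (hd0 _) (ha0 j)
          have hJk : J ≤ k - 1 - j := by have := Finset.mem_range.1 hj; omega
          have h := hJ _ hJk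
          rw [Real.dist_eq, sub_zero] at h
          exact le_of_lt (lt_of_le_of_lt (le_abs_self _) h)
      _ = (∑ j ∈ range T, a j) * ε' := by rw [Finset.sum_mul]
      _ ≤ S * ε' := mul_le_mul (hpartle T) le_rfl hε'0.le hS0
  have h2 : ∑ j ∈ Ico T k, a j * d (k - 1 - j) ≤ D * ε' := by
    calc ∑ j ∈ Ico T k, a j * d (k - 1 - j) ≤ ∑ j ∈ Ico T k, a j * D :=
          Finset.sum_le_sum fun j _ => mul_le_mul le_rfl (hD' _) (hd0 _) (ha0 j)
      _ = (∑ j ∈ Ico T k, a j) * D := by rw [Finset.sum_mul]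
      _ ≤ (S - ∑ j ∈ range T, a j) * D := by
          refine mul_le_mul ?_ le_rfl hD0 (by linarith [hpartle T])
          have e : ∑ j ∈ range T, a j + ∑ j ∈ Ico T k, a j = ∑ j ∈ range k, a j :=
            Finset.sum_range_add_sum_Ico _ hTk
          linarith [hpartle k]
      _ ≤ ε' * D := mul_le_mul (le_of_lt hT) le_rfl hD0 hε'0.le
      _ = D * ε' := mul_comm _ _
  have hfin : (S + D) * ε' < ε := by
    rw [hε']
    have hlt : (S + D) / (S + D + 1) < 1 := by
      rw [div_lt_one (by linarith)]; linarith
    calc (S + D) * (ε / (S + D + 1)) = ((S + D) / (S + D + 1)) * ε := by ring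
      _ < 1 * ε := mul_lt_mul_of_pos_right hlt hε
      _ = ε := one_mul ε
  nlinarith [h1, h2]

set_option maxHeartbeats 1000000 in
lemma affine_rec_tendsto {ι : Type*} [Fintype ι] [DecidableEq ι] (N : Matrix ι ι ℝ)
    (hsum : Summable fun j => ‖N ^ j‖) (hdet : IsUnit (1 - N).det)
    (x c : ℕ → ι → ℝ) (cinf : ι → ℝ)
    (hx : ∀ k, x (k + 1) = N.mulVec (x k) + c k)
    (hc : Tendsto c atTop (nhds cinf)) :
    Tendsto x atTop (nhds ((1 - N)⁻¹.mulVec cinf)) := by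
  set L := (1 - N)⁻¹.mulVec cinf with hL
  have hLfix : N.mulVec L + cinf = L := by
    have h1 : (1 - N).mulVec L = cinf := by
      rw [hL, Matrix.mulVec_mulVec, Matrix.mul_nonsing_inv _ hdet, Matrix.one_mulVec]
    rw [Matrix.sub_mulVec, Matrix.one_mulVec] at h1
    rw [← h1]; abel
  set y := fun k => x k - L with hy
  set d := fun k => c k - cinf with hd
  have hyrec : ∀ k, y (k + 1) = N.mulVec (y k) + d k := by
    intro k
    show x (k + 1) - L = N.mulVec (x k - L) + (c k - cinf)
    conv_lhs => rw [hx k, ← hLfix]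
    rw [Matrix.mulVec_sub]
    abel
  have hclosed : ∀ k, y k = (N ^ k).mulVec (y 0)
      + ∑ j ∈ range k, (N ^ (k - 1 - j)).mulVec (d j) := by
    intro k; induction k with
    | zero => simp
    | succ k ih =>
      rw [hyrec k, ih, Matrix.mulVec_add, Matrix.mulVec_mulVec, ← pow_succ']
      have hms : N.mulVec (∑ j ∈ range k, (N ^ (k - 1 - j)).mulVec (d j))
          = ∑ j ∈ range k, (N ^ (k - j)).mulVec (d j) := by
        have hmap := map_sum (Matrix.mulVecLin N)
          (fun j => (N ^ (k - 1 - j)).mulVec (d j)) (range k)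
        simp only [Matrix.mulVecLin_apply] at hmap
        rw [hmap]
        refine Finset.sum_congr rfl fun j hj => ?_
        rw [Matrix.mulVec_mulVec, ← pow_succ']
        have hjk := Finset.mem_range.1 hj
        have he : k - 1 - j + 1 = k - j := by omega
        rw [he]
      rw [hms, Finset.sum_range_succ]
      have e1 : ∀ j ∈ range k, (N ^ (k - j)).mulVec (d j) = (N ^ (k + 1 - 1 - j)).mulVec (d j) := by
        intro j hj
        have he : k - j = k + 1 - 1 - j := by omega
        rw [he]
      rw [Finset.sum_congr rfl e1]
      have e2 : (N ^ (k + 1 - 1 - k)).mulVec (d k) = d k := by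
        simp
      rw [e2, add_assoc]
  have hdlim : Tendsto d atTop (nhds 0) := by
    have := hc.sub (tendsto_const_nhds (x := cinf))
    simpa [hd] using this
  have hdnorm : Tendsto (fun k => ‖d k‖) atTop (nhds 0) :=
    tendsto_zero_iff_norm_tendsto_zero.1 hdlim
  have hbound : ∀ k, ‖y k‖ ≤ ‖N ^ k‖ * ‖y 0‖ + ∑ j ∈ range k, ‖N ^ j‖ * ‖d (k - 1 - j)‖ := by
    intro k
    rw [hclosed k]
    refine le_trans (norm_add_le _ _) (add_le_add (Matrix.linfty_opNorm_mulVec _ _) ?_)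
    refine le_trans (norm_sum_le _ _) ?_
    calc ∑ j ∈ range k, ‖(N ^ (k - 1 - j)).mulVec (d j)‖
        ≤ ∑ j ∈ range k, ‖N ^ (k - 1 - j)‖ * ‖d j‖ :=
          Finset.sum_le_sum fun j _ => Matrix.linfty_opNorm_mulVec _ _
      _ = ∑ j ∈ range k, ‖N ^ j‖ * ‖d (k - 1 - j)‖ := by
          have hc : ∀ j ∈ range k, ‖N ^ (k - 1 - j)‖ * ‖d j‖
              = (fun i => ‖N ^ i‖ * ‖d (k - 1 - i)‖) (k - 1 - j) := by
            intro j hj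
            have hjk := Finset.mem_range.1 hj
            have he : k - 1 - (k - 1 - j) = j := by omega
            simp only [he]
          rw [Finset.sum_congr rfl hc]
          exact Finset.sum_range_reflect (fun i => ‖N ^ i‖ * ‖d (k - 1 - i)‖) k
  have hconv : Tendsto (fun k => ∑ j ∈ range k, ‖N ^ j‖ * ‖d (k - 1 - j)‖) atTop (nhds 0) :=
    tendsto_conv (a := fun j => ‖N ^ j‖) (d := fun k => ‖d k‖)
      (fun j => norm_nonneg _) hsum (fun j => norm_nonneg _) hdnorm
  have hy0 : Tendsto y atTop (nhds 0) := by
    refine squeeze_zero_norm hbound ?_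
    have := (hsum.tendsto_atTop_zero.mul_const ‖y 0‖).add hconv
    simpa using this
  have hxy : ∀ k, x k = y k + L := fun k => by simp [hy]
  have := hy0.add (tendsto_const_nhds (x := L))
  simp only [zero_add] at this
  exact this.congr fun k => (hxy k).symm



variable {ι : Type*} [Fintype ι] [DecidableEq ι]

lemma pow_entry_nonneg {B : Matrix ι ι ℝ} (h : ∀ i j, 0 ≤ B i j) (k : ℕ) :
    ∀ i j, 0 ≤ (B ^ k) i j := by
  induction k with
  | zero =>
    intro i j; rw [pow_zero]
    by_cases hij : i = j <;> simp [Matrix.one_apply, hij]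
  | succ k ih =>
    intro i j; rw [pow_succ, Matrix.mul_apply]
    exact Finset.sum_nonneg fun p _ => mul_nonneg (ih i p) (h p j)

lemma rowsum_mul (A B : Matrix ι ι ℝ) (i : ι) :
    ∑ j, (A * B) i j = ∑ p, A i p * ∑ j, B p j := by
  simp_rw [Matrix.mul_apply, Finset.mul_sum]
  exact Finset.sum_comm

lemma rowsum_pow_le_one {B : Matrix ι ι ℝ} (h0 : ∀ i j, 0 ≤ B i j)
    (h1 : ∀ i, ∑ j, B i j ≤ 1) (k : ℕ) : ∀ i, ∑ j, (B ^ k) i j ≤ 1 := by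
  induction k with
  | zero => intro i; simp [Matrix.one_apply]
  | succ k ih =>
    intro i
    rw [pow_succ, rowsum_mul]
    calc ∑ p, (B ^ k) i p * ∑ j, B p j ≤ ∑ p, (B ^ k) i p * 1 :=
          Finset.sum_le_sum fun p _ =>
            mul_le_mul_of_nonneg_left (h1 p) (pow_entry_nonneg h0 k i p)
      _ ≤ 1 := by simpa using ih i

lemma rowsum_pow_anti {B : Matrix ι ι ℝ} (h0 : ∀ i j, 0 ≤ B i j)
    (h1 : ∀ i, ∑ j, B i j ≤ 1) (i : ι) :
    Antitone fun k => ∑ j, (B ^ k) i j := by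
  refine antitone_nat_of_succ_le fun k => ?_
  rw [pow_succ, rowsum_mul]
  calc ∑ p, (B ^ k) i p * ∑ j, B p j ≤ ∑ p, (B ^ k) i p * 1 :=
        Finset.sum_le_sum fun p _ =>
          mul_le_mul_of_nonneg_left (h1 p) (pow_entry_nonneg h0 k i p)
    _ = ∑ p, (B ^ k) i p := by simp

lemma norm_lt_one_of_rowsum_lt_one {A : Matrix ι ι ℝ} (h0 : ∀ i j, 0 ≤ A i j)
    (h : ∀ i, ∑ j, A i j < 1) : ‖A‖ < 1 := by
  have : ‖A‖₊ < 1 := by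
    rw [Matrix.linfty_opNNNorm_def]
    refine Finset.sup_lt_iff (by norm_num) |>.2 fun i _ => ?_
    rw [← NNReal.coe_lt_coe]
    push_cast
    calc ∑ j, (‖A i j‖₊ : ℝ) = ∑ j, A i j := by
          refine Finset.sum_congr rfl fun j _ => ?_
          rw [coe_nnnorm, Real.norm_of_nonneg (h0 i j)]
      _ < 1 := h i
  exact_mod_cast this

lemma exists_norm_pow_lt_one {B : Matrix ι ι ℝ} (h0 : ∀ i j, 0 ≤ B i j)
    (h1 : ∀ i, ∑ j, B i j ≤ 1) (hreach : ∀ i, ∃ k, ∑ j, (B ^ k) i j < 1) :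
    ∃ q, 0 < q ∧ ‖B ^ q‖ < 1 := by
  choose f hf using hreach
  refine ⟨1 + Finset.univ.sup f, by omega, ?_⟩
  refine norm_lt_one_of_rowsum_lt_one (pow_entry_nonneg h0 _) fun i => ?_
  refine lt_of_le_of_lt (rowsum_pow_anti h0 h1 i ?_) (hf i)
  exact le_trans (Finset.le_sup (Finset.mem_univ i)) (by omega)

lemma isUnit_det_one_sub {N : Matrix ι ι ℝ} {q : ℕ} (h : ‖N ^ q‖ < 1) :
    IsUnit (1 - N).det := by
  have hq' : ((1 : Matrix ι ι ℝ) - N ^ q).det ≠ 0 := by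
    intro hdet0
    obtain ⟨v, hv0, hv⟩ := Matrix.exists_mulVec_eq_zero_iff.2 hdet0
    rw [Matrix.sub_mulVec, Matrix.one_mulVec, sub_eq_zero] at hv
    have hvpos : 0 < ‖v‖ := norm_pos_iff.2 hv0
    have hle : ‖v‖ ≤ ‖N ^ q‖ * ‖v‖ := by
      conv_lhs => rw [hv]
      exact Matrix.linfty_opNorm_mulVec _ _
    nlinarith
  have hfac : (1 : Matrix ι ι ℝ) - N ^ q = (∑ i ∈ range q, N ^ i) * (1 - N) := by
    have hg := geom_sum_mul N q
    have : (∑ i ∈ range q, N ^ i) * (1 - N) = -((∑ i ∈ range q, N ^ i) * (N - 1)) := by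
      rw [← mul_neg]; congr 1; abel
    rw [this, hg]; abel
  refine isUnit_iff_ne_zero.2 fun h0 => hq' ?_
  rw [hfac, Matrix.det_mul, h0, mul_zero]

lemma tendsto_mulVec {ι κ : Type*} [Fintype ι] [Fintype κ] (M : Matrix ι κ ℝ)
    {x : ℕ → κ → ℝ} {L : κ → ℝ} (h : Tendsto x atTop (nhds L)) :
    Tendsto (fun k => M.mulVec (x k)) atTop (nhds (M.mulVec L)) := by
  rw [tendsto_pi_nhds] at h ⊢
  intro i
  simp only [Matrix.mulVec, dotProduct]
  exact tendsto_finset_sum _ fun j _ => (h j).const_mul _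



lemma kron_mulVec_inl {α β γ : Type*} [Fintype α] [Fintype β] [Fintype γ]
    (A11 : Matrix α α ℝ) (A12 : Matrix α β ℝ) (A21 : Matrix β α ℝ) (A22 : Matrix β β ℝ)
    (Cm : Matrix γ γ ℝ) (x : (α ⊕ β) × γ → ℝ) (i : α) (a : γ) :
    ((fromBlocks A11 A12 A21 A22) ⊗ₖ Cm).mulVec x (Sum.inl i, a)
      = (A11 ⊗ₖ Cm).mulVec (fun p => x (Sum.inl p.1, p.2)) (i, a)
      + (A12 ⊗ₖ Cm).mulVec (fun p => x (Sum.inr p.1, p.2)) (i, a) := by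
  simp only [Matrix.mulVec, dotProduct, Matrix.kroneckerMap_apply,
    Fintype.sum_prod_type, Fintype.sum_sum_type, Matrix.fromBlocks_apply₁₁,
    Matrix.fromBlocks_apply₁₂]

lemma kron_mulVec_inr {α β γ : Type*} [Fintype α] [Fintype β] [Fintype γ]
    (A11 : Matrix α α ℝ) (A12 : Matrix α β ℝ) (A21 : Matrix β α ℝ) (A22 : Matrix β β ℝ)
    (Cm : Matrix γ γ ℝ) (x : (α ⊕ β) × γ → ℝ) (i : β) (a : γ) :
    ((fromBlocks A11 A12 A21 A22) ⊗ₖ Cm).mulVec x (Sum.inr i, a)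
      = (A21 ⊗ₖ Cm).mulVec (fun p => x (Sum.inl p.1, p.2)) (i, a)
      + (A22 ⊗ₖ Cm).mulVec (fun p => x (Sum.inr p.1, p.2)) (i, a) := by
  simp only [Matrix.mulVec, dotProduct, Matrix.kroneckerMap_apply,
    Fintype.sum_prod_type, Fintype.sum_sum_type, Matrix.fromBlocks_apply₂₁,
    Matrix.fromBlocks_apply₂₂]



variable {ι κ : Type*} [Fintype ι] [Fintype κ]

lemma norm_le_total (A : Matrix ι κ ℝ) : ‖A‖ ≤ ∑ i, ∑ j, |A i j| := by
  have h : ‖A‖₊ ≤ ∑ i, ∑ j, ‖A i j‖₊ := by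
    rw [Matrix.linfty_opNNNorm_def]
    refine Finset.sup_le fun i _ => ?_
    exact Finset.single_le_sum (f := fun i => ∑ j, ‖A i j‖₊)
      (fun i _ => zero_le) (Finset.mem_univ i)
  calc ‖A‖ = ((‖A‖₊ : ℝ)) := rfl
    _ ≤ ((∑ i, ∑ j, ‖A i j‖₊ : NNReal) : ℝ) := by exact_mod_cast h
    _ = ∑ i, ∑ j, |A i j| := by
      push_cast
      refine Finset.sum_congr rfl fun i _ => Finset.sum_congr rfl fun j _ => ?_
      rw [Real.norm_eq_abs]

lemma tendsto_norm_zero_of_entries {A : ℕ → Matrix ι κ ℝ}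
    (h : ∀ i j, Tendsto (fun k => A k i j) atTop (nhds 0)) :
    Tendsto (fun k => ‖A k‖) atTop (nhds 0) := by
  have hg : Tendsto (fun k => ∑ i, ∑ j, |A k i j|) atTop (nhds 0) := by
    have := tendsto_finset_sum (univ : Finset ι)
      (f := fun i (k : ℕ) => ∑ j, |A k i j|) (fun i _ =>
        tendsto_finset_sum (univ : Finset κ) (f := fun j (k : ℕ) => |A k i j|)
          (fun j _ => by simpa using (h i j).abs))
    simpa using this
  exact squeeze_zero (fun k => norm_nonneg _) (fun k => norm_le_total (A k)) hg

lemma norm_le_one_of_rowsum {A : Matrix ι κ ℝ} (h0 : ∀ i j, 0 ≤ A i j)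
    (h1 : ∀ i, ∑ j, A i j ≤ 1) : ‖A‖ ≤ 1 := by
  have h : ‖A‖₊ ≤ 1 := by
    rw [Matrix.linfty_opNNNorm_def]
    refine Finset.sup_le fun i _ => ?_
    rw [← NNReal.coe_le_coe]
    push_cast
    calc ∑ j, (‖A i j‖₊ : ℝ) = ∑ j, A i j := by
          refine Finset.sum_congr rfl fun j _ => ?_
          rw [coe_nnnorm, Real.norm_of_nonneg (h0 i j)]
      _ ≤ 1 := h1 i
  exact_mod_cast h

end FJ9

open FJ9 in
set_option maxHeartbeats 1000000 in
theorem fj_multidim_convergence_formula {n₁ n₂ m : ℕ} (hn₂ : 0 < n₂)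
    (W11 : Matrix (Fin n₁) (Fin n₁) ℝ) (W12 : Matrix (Fin n₁) (Fin n₂) ℝ)
    (W22 : Matrix (Fin n₂) (Fin n₂) ℝ) (lam1 : Fin n₁ → ℝ)
    (W : Matrix (Fin n₁ ⊕ Fin n₂) (Fin n₁ ⊕ Fin n₂) ℝ)
    (hWblock : W = Matrix.fromBlocks W11 W12 0 W22)
    (lam : Fin n₁ ⊕ Fin n₂ → ℝ)
    (hlamblock : lam = Sum.elim lam1 (fun _ => 1))
    (hW0 : ∀ i j, 0 ≤ W i j) (hW1 : ∀ i, ∑ j, W i j = 1)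
    (hlam : ∀ i, 0 ≤ lam i ∧ lam i ≤ 1)
    (C : Matrix (Fin m) (Fin m) ℝ)
    -- the oblivious agents are exactly the agents of the second block:
    (hobl : ∀ i : Fin n₁ ⊕ Fin n₂,
      (¬ (lam i < 1 ∨ ∃ j, lam j < 1 ∧ Relation.TransGen (fun a b => 0 < W a b) i j)) ↔
        ∃ i₂ : Fin n₂, i = Sum.inr i₂)
    (Cstar : Matrix (Fin m) (Fin m) ℝ)
    (hC : Tendsto (fun k => C ^ k) atTop (nhds Cstar))
    (W22star : Matrix (Fin n₂) (Fin n₂) ℝ)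
    (hW22 : Tendsto (fun k => W22 ^ k) atTop (nhds W22star) ∨
      (Cstar = 0 ∧ W22star = 0)) :
    ∀ u : (Fin n₁ ⊕ Fin n₂) × Fin m → ℝ,
      Tendsto (fun k => (fun x => ((Matrix.diagonal lam * W) ⊗ₖ C).mulVec x
          + ((1 - Matrix.diagonal lam) ⊗ₖ (1 : Matrix (Fin m) (Fin m) ℝ)).mulVec u)^[k] u)
        atTop
        (nhds (fun q : (Fin n₁ ⊕ Fin n₂) × Fin m =>
          Sum.elim
            (fun i : Fin n₁ =>
              (1 - (Matrix.diagonal lam1 * W11) ⊗ₖ C)⁻¹.mulVec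
                (((1 - Matrix.diagonal lam1) ⊗ₖ (1 : Matrix (Fin m) (Fin m) ℝ)).mulVec
                    (fun p : Fin n₁ × Fin m => u (Sum.inl p.1, p.2))
                  + ((Matrix.diagonal lam1 * W12 * W22star) ⊗ₖ (C * Cstar)).mulVec
                    (fun p : Fin n₂ × Fin m => u (Sum.inr p.1, p.2)))
                (i, q.2))
            (fun i : Fin n₂ =>
              (W22star ⊗ₖ Cstar).mulVec
                (fun p : Fin n₂ × Fin m => u (Sum.inr p.1, p.2)) (i, q.2))
            q.1)) := by
  subst hWblock
  subst hlamblock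
  intro u
  -- abbreviations (as plain defs so everything stays definitionally equal to the goal)
  have hlam1 : ∀ i, 0 ≤ lam1 i ∧ lam1 i ≤ 1 := fun i => by simpa using hlam (Sum.inl i)
  -- entrywise facts
  have hW11nn : ∀ i j, 0 ≤ W11 i j := fun i j => by simpa using hW0 (Sum.inl i) (Sum.inl j)
  have hW12nn : ∀ i j, 0 ≤ W12 i j := fun i j => by simpa using hW0 (Sum.inl i) (Sum.inr j)
  have hW22nn : ∀ i j, 0 ≤ W22 i j := fun i j => by simpa using hW0 (Sum.inr i) (Sum.inr j)
  have hW11row : ∀ i, ∑ j, W11 i j ≤ 1 := by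
    intro i
    have h := hW1 (Sum.inl i)
    rw [Fintype.sum_sum_type] at h
    simp only [Matrix.fromBlocks_apply₁₁, Matrix.fromBlocks_apply₁₂] at h
    have : 0 ≤ ∑ j, W12 i j := Finset.sum_nonneg fun j _ => hW12nn i j
    linarith
  have hW22row : ∀ i, ∑ j, W22 i j = 1 := by
    intro i
    have h := hW1 (Sum.inr i)
    rw [Fintype.sum_sum_type] at h
    simp only [Matrix.fromBlocks_apply₂₁, Matrix.fromBlocks_apply₂₂, Matrix.zero_apply] at h
    simpa using h
  have hB1nn : ∀ i j, 0 ≤ (Matrix.diagonal lam1 * W11) i j := by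
    intro i j
    rw [Matrix.diagonal_mul]
    exact mul_nonneg (hlam1 i).1 (hW11nn i j)
  have hB1row : ∀ i, ∑ j, (Matrix.diagonal lam1 * W11) i j ≤ 1 := by
    intro i
    have he : ∑ j, (Matrix.diagonal lam1 * W11) i j = lam1 i * ∑ j, W11 i j := by
      rw [Finset.mul_sum]
      exact Finset.sum_congr rfl fun j _ => Matrix.diagonal_mul _ _ _ _
    rw [he]
    have hs0 : 0 ≤ ∑ j, W11 i j := Finset.sum_nonneg fun j _ => hW11nn i j
    nlinarith [(hlam1 i).1, (hlam1 i).2, hW11row i]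
  -- the reachability argument
  have hQbase : ∀ i : Fin n₁, lam1 i < 1 →
      ∃ k, ∑ j, ((Matrix.diagonal lam1 * W11) ^ k) i j < 1 := by
    intro i hi
    refine ⟨1, ?_⟩
    rw [pow_one]
    have he : ∑ j, (Matrix.diagonal lam1 * W11) i j = lam1 i * ∑ j, W11 i j := by
      rw [Finset.mul_sum]
      exact Finset.sum_congr rfl fun j _ => Matrix.diagonal_mul _ _ _ _
    rw [he]
    have hs0 : 0 ≤ ∑ j, W11 i j := Finset.sum_nonneg fun j _ => hW11nn i j
    nlinarith [(hlam1 i).1, hW11row i]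
  have hQstep : ∀ i p : Fin n₁, 0 < W11 i p →
      (∃ k, ∑ j, ((Matrix.diagonal lam1 * W11) ^ k) p j < 1) →
      (∃ k, ∑ j, ((Matrix.diagonal lam1 * W11) ^ k) i j < 1) := by
    intro i p hWip hp
    by_cases hi : lam1 i < 1
    · exact hQbase i hi
    · have hlam1i : lam1 i = 1 := le_antisymm (hlam1 i).2 (not_lt.1 hi)
      obtain ⟨k, hk⟩ := hp
      refine ⟨k + 1, ?_⟩
      rw [pow_succ', rowsum_mul]
      have hlt : ∑ p', (Matrix.diagonal lam1 * W11) i p' *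
            ∑ j, ((Matrix.diagonal lam1 * W11) ^ k) p' j
          < ∑ p', (Matrix.diagonal lam1 * W11) i p' := by
        refine Finset.sum_lt_sum (fun p' _ => ?_) ⟨p, Finset.mem_univ p, ?_⟩
        · calc (Matrix.diagonal lam1 * W11) i p' * ∑ j, ((Matrix.diagonal lam1 * W11) ^ k) p' j
              ≤ (Matrix.diagonal lam1 * W11) i p' * 1 :=
                mul_le_mul_of_nonneg_left (rowsum_pow_le_one hB1nn hB1row k p') (hB1nn i p')
            _ = (Matrix.diagonal lam1 * W11) i p' := mul_one _
        · have hB1ip : 0 < (Matrix.diagonal lam1 * W11) i p := by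
            rw [Matrix.diagonal_mul, hlam1i, one_mul]
            exact hWip
          calc (Matrix.diagonal lam1 * W11) i p * ∑ j, ((Matrix.diagonal lam1 * W11) ^ k) p j
              < (Matrix.diagonal lam1 * W11) i p * 1 := by
                exact mul_lt_mul_of_pos_left hk hB1ip
            _ = (Matrix.diagonal lam1 * W11) i p := mul_one _
      exact lt_of_lt_of_le hlt (hB1row i)
  have hwalkred : ∀ cd dd : Fin n₁ ⊕ Fin n₂,
      Relation.TransGen (fun a b => 0 < Matrix.fromBlocks W11 W12 0 W22 a b) cd dd →
      ∀ a b : Fin n₁, cd = Sum.inl a → dd = Sum.inl b →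
      Relation.TransGen (fun a b : Fin n₁ => 0 < W11 a b) a b := by
    intro cd dd h
    induction h with
    | single h =>
      intro a b ha hb
      subst ha; subst hb
      exact Relation.TransGen.single (by simpa using h)
    | tail hT h ih =>
      rename_i emid efin
      intro a b ha hb
      subst ha; subst hb
      cases emid with
      | inl e' =>
        exact Relation.TransGen.tail (ih a e' rfl rfl) (by simpa using h)
      | inr x =>
        exfalso
        have : (0 : ℝ) < 0 := by simpa using h
        exact lt_irrefl _ this
  have hQwalk : ∀ a b : Fin n₁, Relation.TransGen (fun a b : Fin n₁ => 0 < W11 a b) a b →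
      (∃ k, ∑ j, ((Matrix.diagonal lam1 * W11) ^ k) b j < 1) →
      (∃ k, ∑ j, ((Matrix.diagonal lam1 * W11) ^ k) a j < 1) := by
    intro a b h
    induction h with
    | single h => exact fun hb => hQstep _ _ h hb
    | tail hT h ih => exact fun hc => ih (hQstep _ _ h hc)
  have hreach : ∀ i : Fin n₁, ∃ k, ∑ j, ((Matrix.diagonal lam1 * W11) ^ k) i j < 1 := by
    intro i
    have hni : ¬∃ i₂ : Fin n₂, (Sum.inl i : Fin n₁ ⊕ Fin n₂) = Sum.inr i₂ := by simp
    have h' := not_not.1 (fun hn => hni ((hobl (Sum.inl i)).1 hn))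
    rcases h' with h1 | ⟨j, hj1, hwalk⟩
    · exact hQbase i (by simpa using h1)
    · cases j with
      | inr j2 => simp at hj1
      | inl j1 =>
        exact hQwalk i j1 (hwalkred _ _ hwalk i j1 rfl rfl) (hQbase j1 (by simpa using hj1))
  -- Schur stability data
  obtain ⟨q, hq0, hq⟩ := exists_norm_pow_lt_one hB1nn hB1row hreach
  have hsumB : Summable fun j => ‖(Matrix.diagonal lam1 * W11) ^ j‖ := summable_pow_norm hq0 hq
  have hCent : ∀ a b, Tendsto (fun k => (C ^ k) a b) atTop (nhds (Cstar a b)) := by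
    intro a b
    have h1 : Tendsto (fun k => (C ^ k) a) atTop (nhds (Cstar a)) := tendsto_pi_nhds.1 hC a
    exact tendsto_pi_nhds.1 h1 b
  obtain ⟨Kc, hKc⟩ : ∃ Kc, ∀ j, ‖C ^ j‖ ≤ Kc := by
    have ht : Tendsto (fun j : ℕ => ∑ a, ∑ b, |(C ^ j) a b|) atTop
        (nhds (∑ a, ∑ b, |Cstar a b|)) := by
      refine tendsto_finset_sum _ fun a _ => ?_
      exact tendsto_finset_sum _ fun b _ => (hCent a b).abs
    obtain ⟨Kc, hKc⟩ := ht.bddAbove_range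
    exact ⟨Kc, fun j => le_trans (norm_le_total _) (hKc ⟨j, rfl⟩)⟩
  have hNnorm : ∀ j, ‖((Matrix.diagonal lam1 * W11) ⊗ₖ C) ^ j‖
      ≤ ‖(Matrix.diagonal lam1 * W11) ^ j‖ * Kc := by
    intro j
    rw [kron_pow]
    exact le_trans (norm_kron _ _)
      (mul_le_mul le_rfl (hKc j) (norm_nonneg _) (norm_nonneg _))
  have hsumN : Summable fun j => ‖((Matrix.diagonal lam1 * W11) ⊗ₖ C) ^ j‖ :=
    Summable.of_nonneg_of_le (fun j => norm_nonneg _) hNnorm (hsumB.mul_right Kc)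
  have hdet : IsUnit (1 - (Matrix.diagonal lam1 * W11) ⊗ₖ C).det := by
    have hz : Tendsto (fun j => ‖(Matrix.diagonal lam1 * W11) ^ j‖ * Kc) atTop (nhds 0) := by
      simpa using (hsumB.tendsto_atTop_zero.mul_const Kc)
    obtain ⟨J, hJ⟩ := (Metric.tendsto_atTop.1 hz) 1 one_pos
    have h1 : ‖((Matrix.diagonal lam1 * W11) ⊗ₖ C) ^ J‖ < 1 := by
      refine lt_of_le_of_lt (hNnorm J) ?_
      have hd := hJ J le_rfl
      rw [Real.dist_eq, sub_zero] at hd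
      exact lt_of_le_of_lt (le_abs_self _) hd
    exact isUnit_det_one_sub h1
  -- block identities
  have hPb : Matrix.diagonal (Sum.elim lam1 fun _ => (1:ℝ)) * Matrix.fromBlocks W11 W12 0 W22
      = Matrix.fromBlocks (Matrix.diagonal lam1 * W11) (Matrix.diagonal lam1 * W12) 0 W22 := by
    rw [← Matrix.fromBlocks_diagonal, Matrix.fromBlocks_multiply]
    simp [Matrix.diagonal_one]
  have hQb : (1 : Matrix (Fin n₁ ⊕ Fin n₂) (Fin n₁ ⊕ Fin n₂) ℝ)
        - Matrix.diagonal (Sum.elim lam1 fun _ => (1:ℝ))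
      = Matrix.fromBlocks (1 - Matrix.diagonal lam1) 0 0 0 := by
    rw [← Matrix.fromBlocks_diagonal, ← Matrix.fromBlocks_one, sub_eq_add_neg,
      Matrix.fromBlocks_neg, Matrix.fromBlocks_add]
    simp [Matrix.diagonal_one, sub_eq_add_neg]
  -- the dynamics
  set F : ((Fin n₁ ⊕ Fin n₂) × Fin m → ℝ) → ((Fin n₁ ⊕ Fin n₂) × Fin m → ℝ) := fun x =>
    ((Matrix.diagonal (Sum.elim lam1 fun _ => (1:ℝ)) * Matrix.fromBlocks W11 W12 0 W22) ⊗ₖ C).mulVec x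
      + ((1 - Matrix.diagonal (Sum.elim lam1 fun _ => (1:ℝ))) ⊗ₖ (1 : Matrix (Fin m) (Fin m) ℝ)).mulVec u
    with hF
  have hx2rec : ∀ k (p : Fin n₂ × Fin m),
      F^[k+1] u (Sum.inr p.1, p.2)
        = (W22 ⊗ₖ C).mulVec (fun p' : Fin n₂ × Fin m => F^[k] u (Sum.inr p'.1, p'.2)) p := by
    intro k p
    obtain ⟨i, a⟩ := p
    rw [Function.iterate_succ_apply']
    simp only [hF]
    rw [Pi.add_apply, hPb, hQb, kron_mulVec_inr, kron_mulVec_inr]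
    simp [Matrix.zero_kronecker, Matrix.zero_mulVec]
  have hx1rec : ∀ k, (fun p : Fin n₁ × Fin m => F^[k+1] u (Sum.inl p.1, p.2))
      = ((Matrix.diagonal lam1 * W11) ⊗ₖ C).mulVec (fun p : Fin n₁ × Fin m => F^[k] u (Sum.inl p.1, p.2))
        + (((Matrix.diagonal lam1 * W12) ⊗ₖ C).mulVec (fun p : Fin n₂ × Fin m => F^[k] u (Sum.inr p.1, p.2))
          + ((1 - Matrix.diagonal lam1) ⊗ₖ (1 : Matrix (Fin m) (Fin m) ℝ)).mulVec
              (fun p : Fin n₁ × Fin m => u (Sum.inl p.1, p.2))) := by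
    intro k
    funext p
    obtain ⟨i, a⟩ := p
    rw [Function.iterate_succ_apply']
    simp only [hF]
    rw [Pi.add_apply, hPb, hQb, kron_mulVec_inl, kron_mulVec_inl]
    simp only [Matrix.zero_kronecker, Matrix.zero_mulVec, Pi.zero_apply, add_zero, Pi.add_apply]
    ring
  have hx2closed : ∀ k, (fun p : Fin n₂ × Fin m => F^[k] u (Sum.inr p.1, p.2))
      = ((W22 ^ k) ⊗ₖ (C ^ k)).mulVec (fun p : Fin n₂ × Fin m => u (Sum.inr p.1, p.2)) := by
    intro k
    induction k with
    | zero =>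
      funext p
      rw [pow_zero, pow_zero, Matrix.one_kronecker_one, Matrix.one_mulVec]
      simp
    | succ k ih =>
      funext p
      rw [hx2rec k p, ih, Matrix.mulVec_mulVec, ← Matrix.mul_kronecker_mul,
        ← pow_succ', ← pow_succ']
  have hx2lim : Tendsto (fun k => fun p : Fin n₂ × Fin m => F^[k] u (Sum.inr p.1, p.2)) atTop
      (nhds ((W22star ⊗ₖ Cstar).mulVec (fun p : Fin n₂ × Fin m => u (Sum.inr p.1, p.2)))) := by
    have hrw : (fun k => fun p : Fin n₂ × Fin m => F^[k] u (Sum.inr p.1, p.2))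
        = fun k => ((W22 ^ k) ⊗ₖ (C ^ k)).mulVec (fun p : Fin n₂ × Fin m => u (Sum.inr p.1, p.2)) :=
      funext hx2closed
    rw [hrw]
    rcases hW22 with hWt | hzero
    · have hWent : ∀ i j, Tendsto (fun k => (W22 ^ k) i j) atTop (nhds (W22star i j)) :=
 by
        intro i j
        have h1 : Tendsto (fun k => (W22 ^ k) i) atTop (nhds (W22star i)) := tendsto_pi_nhds.1 hWt i
        exact tendsto_pi_nhds.1 h1 j
      rw [tendsto_pi_nhds]
      intro p
      simp only [Matrix.mulVec, dotProduct, Matrix.kroneckerMap_apply]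
      refine tendsto_finset_sum _ fun r _ => ?_
      exact ((hWent p.1 r.1).mul (hCent p.2 r.2)).mul_const _
    · obtain ⟨hC0, hW0'⟩ := hzero
      have hlim0 : (W22star ⊗ₖ Cstar).mulVec (fun p : Fin n₂ × Fin m => u (Sum.inr p.1, p.2)) = 0 := by
        rw [hW0', Matrix.zero_kronecker, Matrix.zero_mulVec]
      rw [hlim0]
      have hCk : Tendsto (fun k => ‖C ^ k‖) atTop (nhds 0) := by
        apply tendsto_norm_zero_of_entries
        intro a b
        have hcb := hCent a b
        rw [hC0] at hcb
        simpa using hcb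
      have hWnorm : ∀ k, ‖W22 ^ k‖ ≤ 1 := fun k =>
        norm_le_one_of_rowsum (pow_entry_nonneg hW22nn k)
          (rowsum_pow_le_one hW22nn (fun i => le_of_eq (hW22row i)) k)
      have hgl : Tendsto (fun k => ‖C ^ k‖ * ‖(fun p : Fin n₂ × Fin m => u (Sum.inr p.1, p.2))‖)
          atTop (nhds 0) := by
        simpa using hCk.mul_const ‖(fun p : Fin n₂ × Fin m => u (Sum.inr p.1, p.2))‖
      refine squeeze_zero_norm (fun k => ?_) hgl
      calc ‖((W22 ^ k) ⊗ₖ (C ^ k)).mulVec (fun p : Fin n₂ × Fin m => u (Sum.inr p.1, p.2))‖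
          ≤ ‖(W22 ^ k) ⊗ₖ (C ^ k)‖ * ‖(fun p : Fin n₂ × Fin m => u (Sum.inr p.1, p.2))‖ :=
            Matrix.linfty_opNorm_mulVec _ _
        _ ≤ (‖W22 ^ k‖ * ‖C ^ k‖) * ‖(fun p : Fin n₂ × Fin m => u (Sum.inr p.1, p.2))‖ :=
            mul_le_mul (norm_kron _ _) le_rfl (norm_nonneg _)
              (mul_nonneg (norm_nonneg _) (norm_nonneg _))
        _ ≤ ‖C ^ k‖ * ‖(fun p : Fin n₂ × Fin m => u (Sum.inr p.1, p.2))‖ := by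
            exact mul_le_mul_of_nonneg_right
              (mul_le_of_le_one_left (norm_nonneg _) (hWnorm k)) (norm_nonneg _)
  -- apply the affine recursion lemma
  have hclim : Tendsto (fun k =>
      ((Matrix.diagonal lam1 * W12) ⊗ₖ C).mulVec (fun p : Fin n₂ × Fin m => F^[k] u (Sum.inr p.1, p.2))
        + ((1 - Matrix.diagonal lam1) ⊗ₖ (1 : Matrix (Fin m) (Fin m) ℝ)).mulVec
            (fun p : Fin n₁ × Fin m => u (Sum.inl p.1, p.2))) atTop
      (nhds (((Matrix.diagonal lam1 * W12) ⊗ₖ C).mulVec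
          ((W22star ⊗ₖ Cstar).mulVec (fun p : Fin n₂ × Fin m => u (Sum.inr p.1, p.2)))
        + ((1 - Matrix.diagonal lam1) ⊗ₖ (1 : Matrix (Fin m) (Fin m) ℝ)).mulVec
            (fun p : Fin n₁ × Fin m => u (Sum.inl p.1, p.2)))) :=
    (tendsto_mulVec _ hx2lim).add tendsto_const_nhds
  have hx1lim := affine_rec_tendsto ((Matrix.diagonal lam1 * W11) ⊗ₖ C) hsumN hdet
    (fun k => fun p : Fin n₁ × Fin m => F^[k] u (Sum.inl p.1, p.2))
    (fun k => ((Matrix.diagonal lam1 * W12) ⊗ₖ C).mulVec (fun p : Fin n₂ × Fin m => F^[k] u (Sum.inr p.1, p.2))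
        + ((1 - Matrix.diagonal lam1) ⊗ₖ (1 : Matrix (Fin m) (Fin m) ℝ)).mulVec
            (fun p : Fin n₁ × Fin m => u (Sum.inl p.1, p.2))) _
    hx1rec hclim
  have hcinf_eq : ((Matrix.diagonal lam1 * W12) ⊗ₖ C).mulVec
        ((W22star ⊗ₖ Cstar).mulVec (fun p : Fin n₂ × Fin m => u (Sum.inr p.1, p.2)))
      + ((1 - Matrix.diagonal lam1) ⊗ₖ (1 : Matrix (Fin m) (Fin m) ℝ)).mulVec
          (fun p : Fin n₁ × Fin m => u (Sum.inl p.1, p.2))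
      = ((1 - Matrix.diagonal lam1) ⊗ₖ (1 : Matrix (Fin m) (Fin m) ℝ)).mulVec
          (fun p : Fin n₁ × Fin m => u (Sum.inl p.1, p.2))
        + ((Matrix.diagonal lam1 * W12 * W22star) ⊗ₖ (C * Cstar)).mulVec
            (fun p : Fin n₂ × Fin m => u (Sum.inr p.1, p.2)) := by
    rw [Matrix.mulVec_mulVec, ← Matrix.mul_kronecker_mul, add_comm]
  rw [hcinf_eq] at hx1lim
  -- conclude coordinatewise
  rw [tendsto_pi_nhds]
  rintro ⟨s, a⟩
  cases s with
  | inl i =>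
    have h := tendsto_pi_nhds.1 hx1lim (i, a)
    simpa using h
  | inr i =>
    have h := tendsto_pi_nhds.1 hx2lim (i, a)
    simpa using h
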